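/- For every real number y with |y| < 1 and every n ∈ ℕ, the series ∑_{k=0}^∞ k^n · y^k converges and equals (1/(1−y)) · w_n(y/(1−y)), where w_n is the geometric polynomial of degree n. -/
import Mathlib

/-- The geometric polynomial of degree `n`:
`w_n(y) = ∑_{j=0}^n S(n,j) · j! · y^j`, where `S(n,j)` is the Stirling number of the
second kind, written via its explicit formula
`S(n,j)·j! = ∑_{i=0}^j (−1)^i C(j,i) (j−i)^n` (with the convention `0^0 = 1`). -/
noncomputable def geomPoly (n : ℕ) (y : ℝ) : ℝ :=
  ∑ j ∈ Finset.range (n + 1),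
    (∑ i ∈ Finset.range (j + 1), (-1 : ℝ) ^ i * (j.choose i : ℝ) * ((j - i : ℕ) : ℝ) ^ n) * y ^ j

/-- The coefficient `j! S(n,j)` via the alternating-sum formula. -/
noncomputable def gc (n j : ℕ) : ℝ :=
  ∑ i ∈ Finset.range (j + 1), (-1 : ℝ) ^ i * (j.choose i : ℝ) * ((j - i : ℕ) : ℝ) ^ n

lemma gc_rec (n j : ℕ) : gc (n + 1) (j + 1) = ((j : ℝ) + 1) * (gc n (j + 1) + gc n j) := by
  have key : ∀ i ∈ Finset.range (j + 2),
      (-1 : ℝ) ^ i * ((j + 1).choose i : ℝ) * ((j + 1 - i : ℕ) : ℝ) ^ (n + 1)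
      = ((j : ℝ) + 1) * ((-1 : ℝ) ^ i * ((j + 1).choose i : ℝ) * ((j + 1 - i : ℕ) : ℝ) ^ n)
        - (i : ℝ) * ((-1 : ℝ) ^ i * ((j + 1).choose i : ℝ) * ((j + 1 - i : ℕ) : ℝ) ^ n) := by
    intro i hi
    rw [Finset.mem_range] at hi
    have h : ((j + 1 - i : ℕ) : ℝ) = ((j : ℝ) + 1) - (i : ℝ) := by
      have : i ≤ j + 1 := by omega
      push_cast [Nat.cast_sub this]; ring
    rw [pow_succ, h]; ring
  have h2 : ∑ i ∈ Finset.range (j + 2),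
      (i : ℝ) * ((-1 : ℝ) ^ i * ((j + 1).choose i : ℝ) * ((j + 1 - i : ℕ) : ℝ) ^ n)
      = -(((j : ℝ) + 1) * gc n j) := by
    rw [Finset.sum_range_succ']
    simp only [Nat.cast_zero, zero_mul, add_zero]
    rw [gc, Finset.mul_sum, ← Finset.sum_neg_distrib]
    apply Finset.sum_congr rfl
    intro i hi
    have hc : ((i : ℝ) + 1) * (((j + 1).choose (i + 1)) : ℝ) = ((j : ℝ) + 1) * ((j.choose i) : ℝ) := by
      have h1 : ((j + 1) * j.choose i : ℕ) = ((j + 1).choose (i + 1) * (i + 1) : ℕ) :=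
        Nat.add_one_mul_choose_eq j i
      have := congrArg (fun x : ℕ => (x : ℝ)) h1
      push_cast at this
      linarith
    have hsub : (j + 1 - (i + 1) : ℕ) = (j - i : ℕ) := by omega
    rw [hsub]
    push_cast
    linear_combination (-(-1 : ℝ) ^ i * ((j - i : ℕ) : ℝ) ^ n) * hc
  rw [gc, Finset.sum_congr rfl key, Finset.sum_sub_distrib, h2, ← Finset.mul_sum]
  rw [show (∑ i ∈ Finset.range (j + 2),
      (-1 : ℝ) ^ i * ((j + 1).choose i : ℝ) * ((j + 1 - i : ℕ) : ℝ) ^ n) = gc n (j + 1) from rfl]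
  ring

lemma gc_eq_zero : ∀ n j : ℕ, n < j → gc n j = 0 := by
  intro n
  induction n with
  | zero =>
    intro j hj
    obtain ⟨m, rfl⟩ : ∃ m, j = m + 1 := ⟨j - 1, by omega⟩
    have h := Int.alternating_sum_range_choose_of_ne (n := m + 1) (by omega)
    have h' := congrArg (fun x : ℤ => (x : ℝ)) h
    push_cast at h'
    rw [gc]
    simpa using h'
  | succ n ih =>
    intro j hj
    obtain ⟨m, rfl⟩ : ∃ m, j = m + 1 := ⟨j - 1, by omega⟩
    rw [gc_rec, ih (m + 1) (by omega), ih m (by omega)]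
    ring

lemma choose_helper (k j : ℕ) :
    (k : ℝ) * (k.choose j : ℝ) = (j : ℝ) * (k.choose j : ℝ) + ((j : ℝ) + 1) * (k.choose (j + 1) : ℝ) := by
  have h := Nat.choose_succ_right_eq k j
  rcases le_or_gt j k with hjk | hjk
  · have := congrArg (fun x : ℕ => (x : ℝ)) h
    push_cast [Nat.cast_sub hjk] at this
    linarith
  · rw [Nat.choose_eq_zero_of_lt hjk, Nat.choose_eq_zero_of_lt (by omega)]
    simp

lemma pow_eq_sum_gc (n k : ℕ) :
    (k : ℝ) ^ n = ∑ j ∈ Finset.range (n + 1), gc n j * (k.choose j : ℝ) := by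
  induction n with
  | zero => simp [gc]
  | succ n ih =>
    rw [Finset.sum_range_succ']
    have h0 : gc (n + 1) 0 * (k.choose 0 : ℝ) = 0 := by simp [gc]
    rw [h0, add_zero]
    have step : ∀ j ∈ Finset.range (n + 1),
        gc (n + 1) (j + 1) * (k.choose (j + 1) : ℝ)
        = ((j : ℝ) + 1) * gc n (j + 1) * (k.choose (j + 1) : ℝ)
          + gc n j * (((j : ℝ) + 1) * (k.choose (j + 1) : ℝ)) := by
      intro j _
      rw [gc_rec]; ring
    rw [Finset.sum_congr rfl step, Finset.sum_add_distrib]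
    have hshift : ∑ j ∈ Finset.range (n + 1),
        ((j : ℝ) + 1) * gc n (j + 1) * (k.choose (j + 1) : ℝ)
        = ∑ j ∈ Finset.range (n + 1), (j : ℝ) * gc n j * (k.choose j : ℝ) := by
      set g : ℕ → ℝ := fun j => (j : ℝ) * gc n j * (k.choose j : ℝ) with hg
      have A := Finset.sum_range_succ' g (n + 1)
      have B := Finset.sum_range_succ g (n + 1)
      have hg0 : g 0 = 0 := by simp [hg]
      have hgn : g (n + 1) = 0 := by simp [hg, gc_eq_zero n (n + 1) (by omega)]
      have hL : ∑ j ∈ Finset.range (n + 1), ((j : ℝ) + 1) * gc n (j + 1) * (k.choose (j + 1) : ℝ)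
          = ∑ j ∈ Finset.range (n + 1), g (j + 1) := by
        apply Finset.sum_congr rfl
        intro j _
        simp only [hg]
        push_cast
        ring
      rw [hL]
      rw [hg0, add_zero] at A
      rw [hgn, add_zero] at B
      rw [← A, B]
    rw [hshift, ← Finset.sum_add_distrib]
    have : ∀ j ∈ Finset.range (n + 1),
        (j : ℝ) * gc n j * (k.choose j : ℝ) + gc n j * (((j : ℝ) + 1) * (k.choose (j + 1) : ℝ))
        = (k : ℝ) * (gc n j * (k.choose j : ℝ)) := by
      intro j _
      linear_combination (-(gc n j)) * choose_helper k j
    rw [Finset.sum_congr rfl this, ← Finset.mul_sum, ← ih, pow_succ]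
    ring

/-- For `|y| < 1` and `n ∈ ℕ`, the series `∑_{k=0}^∞ k^n y^k` converges and equals
`(1/(1−y)) · w_n(y/(1−y))`. -/
theorem geometric_like_series (y : ℝ) (hy : |y| < 1) (n : ℕ) :
    HasSum (fun k : ℕ => (k : ℝ) ^ n * y ^ k)
      ((1 / (1 - y)) * geomPoly n (y / (1 - y))) := by
  have hy' : ‖y‖ < 1 := by rwa [Real.norm_eq_abs]
  have hy1 : (1 : ℝ) - y ≠ 0 := by
    have : y < 1 := lt_of_abs_lt hy
    intro h; linarith [sub_eq_zero.mp h]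
  have hj : ∀ j : ℕ, HasSum (fun k : ℕ => (k.choose j : ℝ) * y ^ k) (y ^ j / (1 - y) ^ (j + 1)) := by
    intro j
    have h := (hasSum_choose_mul_geometric_of_norm_lt_one j hy').mul_left (y ^ j)
    have heq : (fun m : ℕ => y ^ j * (((m + j).choose j : ℝ) * y ^ m))
        = fun m : ℕ => ((m + j).choose j : ℝ) * y ^ (m + j) := by
      funext m; rw [pow_add]; ring
    rw [heq] at h
    have hzero : ∑ i ∈ Finset.range j, (i.choose j : ℝ) * y ^ i = 0 := by
      apply Finset.sum_eq_zero
      intro i hi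
      rw [Finset.mem_range] at hi
      rw [Nat.choose_eq_zero_of_lt hi]; simp
    refine (hasSum_nat_add_iff' j).mp ?_
    rw [hzero, sub_zero,
      show y ^ j / (1 - y) ^ (j + 1) = y ^ j * (1 / (1 - y) ^ (j + 1)) from (mul_one_div _ _).symm]
    exact h
  have H : HasSum (fun k : ℕ => ∑ j ∈ Finset.range (n + 1), gc n j * ((k.choose j : ℝ) * y ^ k))
      (∑ j ∈ Finset.range (n + 1), gc n j * (y ^ j / (1 - y) ^ (j + 1))) :=
    hasSum_sum fun j _ => (hj j).mul_left (gc n j)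
  have hfun : (fun k : ℕ => (k : ℝ) ^ n * y ^ k)
      = fun k : ℕ => ∑ j ∈ Finset.range (n + 1), gc n j * ((k.choose j : ℝ) * y ^ k) := by
    funext k
    rw [pow_eq_sum_gc n k, Finset.sum_mul]
    exact Finset.sum_congr rfl fun j _ => by ring
  have hval : (1 / (1 - y)) * geomPoly n (y / (1 - y))
      = ∑ j ∈ Finset.range (n + 1), gc n j * (y ^ j / (1 - y) ^ (j + 1)) := by
    rw [geomPoly, Finset.mul_sum]
    apply Finset.sum_congr rfl
    intro j _
    rw [show (∑ i ∈ Finset.range (j + 1),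
        (-1 : ℝ) ^ i * (j.choose i : ℝ) * ((j - i : ℕ) : ℝ) ^ n) = gc n j from rfl]
    simp only [div_eq_mul_inv, mul_inv, pow_succ, one_mul]
    ring
  rw [hfun, hval]
  exact H
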